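/- Every linear invariant operator T on the space of F_q-linear polynomials has the representation T = Σ_{l≥0} σ_l δ_0^{(l)} with σ_l = (TP_l)(1)/D_l, where {P_l} is the basic sequence of a fixed delta operator δ = τ^{-1}δ_0; the series is finite when applied to any polynomial. -/

import Mathlib

noncomputable section

/-- `[i] = x^{q^i} - x`. -/
def brk {K : Type*} [CommRing K] (q : ℕ) (x : K) (i : ℕ) : K := x ^ q ^ i - x

/-- Carlitz factorial: `D_0 = 1`, `D_i = [i] D_{i-1}^q`. -/
def Dfac {K : Type*} [CommRing K] (q : ℕ) (x : K) : ℕ → K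
  | 0 => 1
  | i + 1 => brk q x (i + 1) * (Dfac q x i) ^ q

/-- The Frobenius `τ` on `F_q`-linear polynomials `Σ a_k t^{q^k}` (encoded as `ℕ →₀ L`). -/
def frob {L : Type*} [CommRing L] (q : ℕ) (u : ℕ →₀ L) : ℕ →₀ L :=
  u.sum fun k a => Finsupp.single (k + 1) (a ^ q)

/-- Evaluation at `t = 1`. -/
def eval1 {L : Type*} [CommRing L] (u : ℕ →₀ L) : L :=
  u.sum fun _ a => a

/-- The multiplicative shift `(ρ_λ u)(t) = u(λ t)`. -/
def rho {K L : Type*} [Field K] [Field L] [Algebra K L] (q : ℕ) (lam : K) (u : ℕ →₀ L) :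
    ℕ →₀ L :=
  u.sum fun k a => Finsupp.single k ((algebraMap K L lam) ^ q ^ k * a)

section Helpers

variable {L : Type*} [Field L]

lemma frob_apply' (q : ℕ) (hq : q ≠ 0) (u : ℕ →₀ L) (m : ℕ) :
    frob q u m = if m = 0 then 0 else (u (m - 1)) ^ q := by
  classical
  rw [frob, Finsupp.sum_apply]
  rcases m with _ | m
  · simp only [if_pos rfl]
    rw [Finsupp.sum]
    exact Finset.sum_eq_zero fun k _ => Finsupp.single_eq_of_ne (by omega)
  · simp only [Nat.succ_ne_zero, if_false, Nat.add_sub_cancel]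
    have : (u.sum fun k a => (Finsupp.single (k + 1) (a ^ q)) (m + 1))
        = u.sum fun k a => if k = m then a ^ q else 0 := by
      apply Finsupp.sum_congr
      intro k _
      rw [Finsupp.single_apply]
      simp only [Nat.add_right_cancel_iff]
    rw [this, Finsupp.sum_ite_eq']
    split_ifs with h
    · rfl
    · rw [Finsupp.notMem_support_iff.mp h, zero_pow hq]

lemma rho_apply' {K : Type*} [Field K] [Algebra K L] (q : ℕ) (lam : K) (u : ℕ →₀ L) (m : ℕ) :
    rho q lam u m = (algebraMap K L lam) ^ q ^ m * u m := by
  classical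
  rw [rho, Finsupp.sum_apply]
  have : (u.sum fun k a => (Finsupp.single k ((algebraMap K L lam) ^ q ^ k * a)) m)
      = u.sum fun k a => if k = m then (algebraMap K L lam) ^ q ^ k * a else 0 := by
    apply Finsupp.sum_congr
    intro k _
    rw [Finsupp.single_apply]
  rw [this, Finsupp.sum_ite_eq']
  split_ifs with h
  · rfl
  · rw [Finsupp.notMem_support_iff.mp h, mul_zero]

/-- coefficient formula for a "diagonal" linear map -/
lemma diag_apply (S : (ℕ →₀ L) →ₗ[L] (ℕ →₀ L)) (e : ℕ → L)
    (hS : ∀ n : ℕ, S (Finsupp.single n 1) = Finsupp.single n (e n)) (u : ℕ →₀ L) (m : ℕ) :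
    S u m = e m * u m := by
  classical
  have hu : u = u.sum fun n a => a • Finsupp.single n (1 : L) := by
    simp only [Finsupp.smul_single, smul_eq_mul, mul_one]
    exact (Finsupp.sum_single u).symm
  conv_lhs => rw [hu]
  rw [map_finsuppSum, Finsupp.sum_apply]
  have : (u.sum fun n a => (S (a • Finsupp.single n (1:L))) m)
      = u.sum fun n a => if n = m then a * e n else 0 := by
    apply Finsupp.sum_congr
    intro n _
    rw [map_smul, hS, Finsupp.smul_single, smul_eq_mul, Finsupp.single_apply]
  rw [this, Finsupp.sum_ite_eq']
  split_ifs with h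
  · ring
  · rw [Finsupp.notMem_support_iff.mp h, mul_zero]

lemma eval1_eq (u : ℕ →₀ L) (N : ℕ) (h : ∀ k, N < k → u k = 0) :
    eval1 u = ∑ m ∈ Finset.range (N + 1), u m := by
  classical
  rw [eval1, Finsupp.sum]
  apply Finset.sum_subset
  · intro k hk
    rw [Finset.mem_range]
    by_contra hk'
    exact Finsupp.mem_support_iff.mp hk (h k (by omega))
  · intro k _ hk
    exact Finsupp.notMem_support_iff.mp hk

lemma frob_iter_apply (q : ℕ) (hq : q ≠ 0) (u : ℕ →₀ L) (l m : ℕ) :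
    (frob q)^[l] u m = if m < l then 0 else (u (m - l)) ^ q ^ l := by
  induction l generalizing m with
  | zero => simp
  | succ l ih =>
    rw [Function.iterate_succ_apply', frob_apply' q hq]
    rcases m with _ | m
    · simp
    · simp only [Nat.succ_ne_zero, if_false, Nat.add_sub_cancel, ih]
      split_ifs with h1 h2 h3
      · exact zero_pow hq
      · omega
      · omega
      · rw [Nat.succ_sub_succ, ← pow_mul, ← pow_succ]

lemma iter_coeff (q : ℕ) (hq : q ≠ 0) (c : ℕ → L) (hc0 : c 0 = 0)
    (δ₀ : (ℕ →₀ L) →ₗ[L] (ℕ →₀ L))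
    (hδ₀c : ∀ (u : ℕ →₀ L) (m : ℕ), δ₀ u m = c m * u m)
    (δ : (ℕ →₀ L) → (ℕ →₀ L)) (hδ : ∀ u, frob q (δ u) = δ₀ u)
    (f : ℕ →₀ L) (l m : ℕ) :
    (frob q)^[l] (δ^[l] f) m = f m * ∏ j ∈ Finset.range l, (c (m - j)) ^ q ^ j := by
  induction l generalizing m with
  | zero => simp
  | succ l ih =>
    have key : (frob q)^[l+1] (δ^[l+1] f) = (frob q)^[l] (δ₀ (δ^[l] f)) := by
      rw [Function.iterate_succ_apply' δ, Function.iterate_succ_apply (frob q), hδ]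
    rw [key, frob_iter_apply q hq]
    split_ifs with h
    · symm
      have hm : m ∈ Finset.range (l + 1) := Finset.mem_range.mpr (by omega)
      rw [Finset.prod_eq_zero hm
        (by rw [Nat.sub_self, hc0]; exact zero_pow (pow_ne_zero _ hq)), mul_zero]
    · have hfi := frob_iter_apply q hq (δ^[l] f) l m
      rw [if_neg h] at hfi
      rw [hδ₀c, mul_pow, ← hfi, ih, Finset.prod_range_succ]
      ring

variable {F : Type*} [Field F]

lemma xpow_inj (i j : ℕ)
    (h : (HahnSeries.single (1:ℤ) (1:F)) ^ i = (HahnSeries.single (1:ℤ) (1:F)) ^ j) :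
    i = j := by
  rw [HahnSeries.single_pow, HahnSeries.single_pow, one_pow, one_pow] at h
  by_contra hij
  have h2 := congrArg (fun s => s.coeff ((i : ℤ))) h
  simp only [nsmul_eq_mul, mul_one, HahnSeries.coeff_single] at h2
  rw [if_pos trivial, if_neg (by exact_mod_cast hij)] at h2
  exact one_ne_zero h2

lemma brk_ne_zero (q : ℕ) (hq2 : 2 ≤ q) (i : ℕ) (hi : 1 ≤ i) :
    brk q (HahnSeries.single (1:ℤ) (1:F)) i ≠ 0 := by
  rw [brk, sub_ne_zero]
  intro h
  nth_rewrite 2 [← pow_one (HahnSeries.single (1:ℤ) (1:F))] at h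
  have h1 := xpow_inj _ _ h
  have h2 : 2 ^ i ≤ q ^ i := Nat.pow_le_pow_left hq2 i
  have h3 : 2 ^ 1 ≤ 2 ^ i := Nat.pow_le_pow_right (by norm_num) hi
  omega

lemma Dfac_ne_zero (q : ℕ) (hq2 : 2 ≤ q) (l : ℕ) :
    Dfac q (HahnSeries.single (1:ℤ) (1:F)) l ≠ 0 := by
  induction l with
  | zero => exact one_ne_zero
  | succ l ih =>
    exact mul_ne_zero (brk_ne_zero q hq2 (l+1) (by omega)) (pow_ne_zero _ ih)

end Helpers

/-- Every linear invariant operator `T` on the space of `F_q`-linear polynomials has the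
representation `T = Σ_{l≥0} σ_l δ₀^{(l)}` with `σ_l = (T P_l)(1) / D_l`, where `{P_l}` is the
basic sequence of a fixed delta operator `δ = τ^{-1}δ₀` and `δ₀^{(l)} = τ^l δ^l`; the series is
finite when applied to any polynomial (of degree `≤ q^N`). -/
theorem invariant_operator_expansion {F L : Type*} [Field F] [Fintype F] [Field L]
    [Algebra (LaurentSeries F) L]
    (p : ℕ) [Fact p.Prime] [CharP F p] [ExpChar L p] [PerfectRing L p]
    (q : ℕ) (hq : q = Fintype.card F)
    (c : ℕ → L) (hc0 : c 0 = 0) (hc : ∀ n, 1 ≤ n → c n ≠ 0)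
    (δ₀ : (ℕ →₀ L) →ₗ[L] (ℕ →₀ L))
    (hδ₀ : ∀ n : ℕ, δ₀ (Finsupp.single n 1) = c n • Finsupp.single n 1)
    (δ : (ℕ →₀ L) → (ℕ →₀ L)) (hδ : ∀ u, frob q (δ u) = δ₀ u)
    (P : ℕ → (ℕ →₀ L))
    (hPdeg : ∀ n : ℕ, P n n ≠ 0 ∧ ∀ k, n < k → P n k = 0)
    (hP01 : eval1 (P 0) = 1) (hP1 : ∀ n, 1 ≤ n → eval1 (P n) = 0)
    (hP0 : δ₀ (P 0) = 0)
    (hPn : ∀ n, 1 ≤ n →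
      δ₀ (P n)
        = algebraMap (LaurentSeries F) L
            (brk q (HahnSeries.single (1 : ℤ) (1 : F)) n) • frob q (P (n - 1)))
    (T : (ℕ →₀ L) →ₗ[L] (ℕ →₀ L))
    (hT : ∀ (lam : LaurentSeries F) (u : ℕ →₀ L), T (rho q lam u) = rho q lam (T u)) :
    ∀ (f : ℕ →₀ L) (N : ℕ), (∀ k, N < k → f k = 0) →
      T f = ∑ l ∈ Finset.range (N + 1),
          (eval1 (T (P l))
              / algebraMap (LaurentSeries F) L
                  (Dfac q (HahnSeries.single (1 : ℤ) (1 : F)) l))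
            • (frob q)^[l] (δ^[l] f) := by
  classical
  intro f N hfN
  set K := LaurentSeries F
  set x : K := HahnSeries.single (1:ℤ) (1:F) with hxdef
  have hq2 : 2 ≤ q := by rw [hq]; exact Fintype.one_lt_card
  have hq0 : q ≠ 0 := by omega
  obtain ⟨e, hpp, hqe⟩ := FiniteField.card F p
  have hqe' : q = p ^ (e : ℕ) := by rw [hq, hqe]
  -- (·)^q is additive on L
  have hpowsum : ∀ (s : Finset ℕ) (g : ℕ → L), (∑ k ∈ s, g k) ^ q = ∑ k ∈ s, (g k) ^ q := by
    intro s g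
    have := map_sum (iterateFrobenius L p (e : ℕ)) g s
    simpa only [iterateFrobenius_def, ← hqe'] using this
  have hinj : Function.Injective (algebraMap K L) := RingHom.injective _
  -- coefficients of δ₀
  have hδ₀c : ∀ (u : ℕ →₀ L) (m : ℕ), δ₀ u m = c m * u m :=
    diag_apply δ₀ c fun n => by
      rw [hδ₀, Finsupp.smul_single, smul_eq_mul, mul_one]
  -- T is diagonal
  set d : ℕ → L := fun n => T (Finsupp.single n 1) n with hd
  have hTd : ∀ n, T (Finsupp.single n 1) = Finsupp.single n (d n) := by
    intro n
    have hrho : rho q x (Finsupp.single n (1:L))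
        = (algebraMap K L x ^ q ^ n) • Finsupp.single n (1:L) := by
      ext m
      rw [rho_apply', Finsupp.smul_apply, Finsupp.single_apply, smul_eq_mul]
      by_cases hmn : n = m
      · subst hmn; simp
      · rw [if_neg hmn, mul_zero, mul_zero]
    have h1 := hT x (Finsupp.single n 1)
    rw [hrho, map_smul] at h1
    ext m
    rw [Finsupp.single_apply]
    by_cases hmn : m = n
    · subst hmn; simp [hd]
    · rw [if_neg (Ne.symm hmn)]
      have h2 := congrArg (fun u : ℕ →₀ L => u m) h1
      simp only [Finsupp.smul_apply, smul_eq_mul] at h2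
      rw [rho_apply'] at h2
      by_contra hne
      have hxx : (algebraMap K L x) ^ q ^ n = (algebraMap K L x) ^ q ^ m :=
        mul_right_cancel₀ hne h2
      rw [← map_pow (algebraMap K L) x (q ^ n), ← map_pow (algebraMap K L) x (q ^ m)] at hxx
      have := xpow_inj _ _ (hinj hxx)
      exact hmn (Nat.pow_right_injective hq2 this).symm
  have hTc : ∀ (u : ℕ →₀ L) (m : ℕ), T u m = d m * u m := diag_apply T d hTd
  -- coefficientwise form of hPn
  have hPc : ∀ n k : ℕ, c (k+1) * P (n+1) (k+1)
      = algebraMap K L (brk q x (n+1)) * (P n k) ^ q := by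
    intro n k
    have h1 := congrArg (fun u : ℕ →₀ L => u (k+1)) (hPn (n+1) (by omega))
    simp only [Nat.add_sub_cancel, Finsupp.smul_apply, smul_eq_mul] at h1
    rw [hδ₀c, frob_apply' q hq0] at h1
    simpa using h1
  have hDL : ∀ l, algebraMap K L (Dfac q x l) ≠ 0 := by
    intro l h
    exact Dfac_ne_zero q hq2 l (hinj (h.trans (map_zero (algebraMap K L)).symm))
  have hσD : ∀ l, eval1 (T (P l)) / algebraMap K L (Dfac q x l) * algebraMap K L (Dfac q x l)
      = eval1 (T (P l)) := fun l => div_mul_cancel₀ _ (hDL l)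
  -- E recursion and vanishing
  have Erec : ∀ l m : ℕ, (∏ j ∈ Finset.range (l+1), c (m + 1 - j) ^ q ^ j)
      = c (m+1) * (∏ j ∈ Finset.range l, c (m - j) ^ q ^ j) ^ q := by
    intro l m
    rw [Finset.prod_range_succ', ← Finset.prod_pow]
    simp only [pow_zero, pow_one, Nat.sub_zero]
    rw [mul_comm]
    congr 1
    apply Finset.prod_congr rfl
    intro j _
    rw [← pow_mul, ← pow_succ]
    congr 2
    omega
  have E0van : ∀ l : ℕ, (∏ j ∈ Finset.range (l+1), c (0 - j) ^ q ^ j) = 0 := by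
    intro l
    apply Finset.prod_eq_zero (Finset.mem_range.mpr (show 0 < l + 1 by omega))
    simp [hc0]
  have Evan : ∀ l m : ℕ, m < l → (∏ j ∈ Finset.range l, c (m - j) ^ q ^ j) = 0 := by
    intro l m hml
    apply Finset.prod_eq_zero (Finset.mem_range.mpr hml)
    rw [Nat.sub_self, hc0]
    exact zero_pow (pow_ne_zero _ hq0)
  -- key orthogonality
  have key : ∀ l n : ℕ,
      (∑ m ∈ Finset.range (n+1), P n m * ∏ j ∈ Finset.range l, c (m - j) ^ q ^ j)
        = if n = l then algebraMap K L (Dfac q x l) else 0 := by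
    intro l
    induction l with
    | zero =>
      intro n
      simp only [Finset.range_zero, Finset.prod_empty, mul_one]
      have he := eval1_eq (P n) n (hPdeg n).2
      rcases Nat.eq_zero_or_pos n with h0 | h1
      · subst h0
        rw [← he, hP01, if_pos rfl, show Dfac q x 0 = 1 from rfl, map_one]
      · rw [← he, hP1 n h1, if_neg (by omega)]
    | succ l ih =>
      intro n
      rcases n with _ | n
      · rw [if_neg (by omega)]
        rw [Finset.sum_range_succ, Finset.sum_range_zero, zero_add, E0van, mul_zero]
      · rw [Finset.sum_range_succ']
        rw [E0van, mul_zero, add_zero]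
        have hterm : ∀ k ∈ Finset.range (n+1),
            P (n+1) (k+1) * ∏ j ∈ Finset.range (l+1), c (k + 1 - j) ^ q ^ j
              = algebraMap K L (brk q x (n+1))
                  * (P n k * ∏ j ∈ Finset.range l, c (k - j) ^ q ^ j) ^ q := by
          intro k _
          rw [Erec, ← mul_assoc, mul_comm (P (n+1) (k+1)) (c (k+1)), hPc n k, mul_pow]
          ring
        rw [Finset.sum_congr rfl hterm, ← Finset.mul_sum, ← hpowsum, ih n]
        by_cases hnl : n = l
        · subst hnl
          rw [if_pos rfl, if_pos rfl,
            show Dfac q x (n+1) = brk q x (n+1) * Dfac q x n ^ q from rfl, map_mul, map_pow]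
        · rw [if_neg hnl, if_neg (by omega), zero_pow hq0, mul_zero]
  -- T (P n) evaluated at 1
  have hTP : ∀ n, eval1 (T (P n)) = ∑ m ∈ Finset.range (n+1), P n m * d m := by
    intro n
    rw [eval1_eq (T (P n)) n (fun k hk => by rw [hTc, (hPdeg n).2 k hk, mul_zero])]
    exact Finset.sum_congr rfl fun m _ => by rw [hTc]; ring
  -- main claim : d is the sigma-expansion
  have claim : ∀ n : ℕ, d n = ∑ l ∈ Finset.range (n+1),
      (eval1 (T (P l)) / algebraMap K L (Dfac q x l))
        * ∏ j ∈ Finset.range l, c (n - j) ^ q ^ j := by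
    intro n
    induction n using Nat.strong_induction_on with
    | _ n IH =>
      have hmain : (∑ m ∈ Finset.range (n+1),
            P n m * ∑ l ∈ Finset.range (n+1),
              (eval1 (T (P l)) / algebraMap K L (Dfac q x l))
                * ∏ j ∈ Finset.range l, c (m - j) ^ q ^ j)
          = ∑ m ∈ Finset.range (n+1), P n m * d m := by
        have h1 : (∑ m ∈ Finset.range (n+1),
              P n m * ∑ l ∈ Finset.range (n+1),
                (eval1 (T (P l)) / algebraMap K L (Dfac q x l))
                  * ∏ j ∈ Finset.range l, c (m - j) ^ q ^ j)
            = ∑ l ∈ Finset.range (n+1),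
                (eval1 (T (P l)) / algebraMap K L (Dfac q x l)) *
                ∑ m ∈ Finset.range (n+1), P n m * ∏ j ∈ Finset.range l, c (m - j) ^ q ^ j := by
          simp_rw [Finset.mul_sum]
          rw [Finset.sum_comm]
          apply Finset.sum_congr rfl; intro l _
          apply Finset.sum_congr rfl; intro m _
          ring
        rw [h1]
        have h2 : ∀ l ∈ Finset.range (n+1),
            (eval1 (T (P l)) / algebraMap K L (Dfac q x l)) *
              (∑ m ∈ Finset.range (n+1), P n m * ∏ j ∈ Finset.range l, c (m - j) ^ q ^ j)
            = if n = l then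
                (eval1 (T (P n)) / algebraMap K L (Dfac q x n))
                  * algebraMap K L (Dfac q x n) else 0 := by
          intro l _
          rw [key l n]
          by_cases hnl : n = l
          · subst hnl; simp
          · rw [if_neg hnl, if_neg hnl, mul_zero]
        rw [Finset.sum_congr rfl h2, Finset.sum_ite_eq,
          if_pos (Finset.mem_range.mpr (by omega)), hσD, hTP]
      have hsplit1 := Finset.sum_range_succ (fun m => P n m * ∑ l ∈ Finset.range (n+1),
          (eval1 (T (P l)) / algebraMap K L (Dfac q x l))
            * ∏ j ∈ Finset.range l, c (m - j) ^ q ^ j) n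
      have hsplit2 := Finset.sum_range_succ (fun m => P n m * d m) n
      rw [hsplit1, hsplit2] at hmain
      have h3 : ∀ m ∈ Finset.range n,
          P n m * ∑ l ∈ Finset.range (n+1),
            (eval1 (T (P l)) / algebraMap K L (Dfac q x l))
              * ∏ j ∈ Finset.range l, c (m - j) ^ q ^ j
            = P n m * d m := by
        intro m hm
        rw [Finset.mem_range] at hm
        congr 1
        rw [IH m hm]
        symm
        apply Finset.sum_subset
        · intro l hl
          rw [Finset.mem_range] at hl ⊢
          omega
        · intro l _ hl
          rw [Finset.mem_range, not_lt] at hl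
          rw [Evan l m (by omega), mul_zero]
      rw [Finset.sum_congr rfl h3] at hmain
      exact (mul_left_cancel₀ (hPdeg n).1 (add_left_cancel hmain)).symm
  -- conclude
  ext m
  rw [hTc, Finsupp.finset_sum_apply]
  have h5 : ∀ l ∈ Finset.range (N+1),
      ((eval1 (T (P l)) / algebraMap K L (Dfac q x l)) • (frob q)^[l] (δ^[l] f)) m
        = (eval1 (T (P l)) / algebraMap K L (Dfac q x l))
            * (f m * ∏ j ∈ Finset.range l, c (m - j) ^ q ^ j) := by
    intro l _
    rw [Finsupp.smul_apply, smul_eq_mul, iter_coeff q hq0 c hc0 δ₀ hδ₀c δ hδ f l m]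
  rw [Finset.sum_congr rfl h5]
  by_cases hm : N < m
  · rw [hfN m hm, mul_zero]
    symm
    apply Finset.sum_eq_zero
    intro l _
    rw [zero_mul, mul_zero]
  · have h6 : (∑ l ∈ Finset.range (N+1),
        (eval1 (T (P l)) / algebraMap K L (Dfac q x l))
          * (f m * ∏ j ∈ Finset.range l, c (m - j) ^ q ^ j))
        = f m * ∑ l ∈ Finset.range (N+1),
            (eval1 (T (P l)) / algebraMap K L (Dfac q x l))
              * ∏ j ∈ Finset.range l, c (m - j) ^ q ^ j := by
      rw [Finset.mul_sum]
      apply Finset.sum_congr rfl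
      intro l _
      ring
    rw [h6]
    have h7 : (∑ l ∈ Finset.range (N+1),
          (eval1 (T (P l)) / algebraMap K L (Dfac q x l))
            * ∏ j ∈ Finset.range l, c (m - j) ^ q ^ j)
        = ∑ l ∈ Finset.range (m+1),
            (eval1 (T (P l)) / algebraMap K L (Dfac q x l))
              * ∏ j ∈ Finset.range l, c (m - j) ^ q ^ j := by
      symm
      apply Finset.sum_subset
      · intro l hl
        rw [Finset.mem_range] at hl ⊢
        omega
      · intro l _ hl
        rw [Finset.mem_range, not_lt] at hl
        rw [Evan l m (by omega), mul_zero]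
    rw [h7, ← claim m, mul_comm]
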